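/- For the task-scheduling objective f(A) = 1 − Π_{k=1}^{|A|}(1 − p_k(a_k)) with all p_k(i) ∈ [0,1], the increment upon appending agent s satisfies the diminishing-returns property along prefixes: if A ⪯ B (A is a prefix of B with |A| = m, |B| = n, m ≤ n) and appending s at stage m+1 to A and at stage n+1 to B both use probabilities p_{m+1}(s) and p_{n+1}(s) with p_{m+1}(s) ≥ p_{n+1}(s), then f(As) − f(A) ≥ f(Bs) − f(B). -/

import Mathlib

/-- The task-scheduling objective: for a string `A` of agent indices, where the `k`-th
selected agent acts at stage `k` (stages numbered from 1) and `p k i` is the success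
probability of agent `i` at stage `k`,
`f(A) = 1 − Π_{k=1}^{|A|} (1 − p k (a_k))`. -/
def taskF {ι : Type*} (p : ℕ → ι → ℝ) (A : List ι) : ℝ :=
  1 - ∏ k : Fin A.length, (1 - p (k.1 + 1) (A.get k))

/-- The survival product `Π_{k=1}^{|A|} (1 − p k (a_k))`. -/
def taskG {ι : Type*} (p : ℕ → ι → ℝ) (A : List ι) : ℝ :=
  ∏ k : Fin A.length, (1 - p (k.1 + 1) (A.get k))

lemma taskG_eq_range {ι : Type*} (p : ℕ → ι → ℝ) (A : List ι) (d : ι) :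
    taskG p A = ∏ k ∈ Finset.range A.length, (1 - p (k + 1) (A.getD k d)) := by
  rw [← Fin.prod_univ_eq_prod_range]
  apply Finset.prod_congr rfl
  intro k _
  rw [List.getD_eq_get A d k]

lemma taskG_append_singleton {ι : Type*} (p : ℕ → ι → ℝ) (A : List ι) (s : ι) :
    taskG p (A ++ [s]) = taskG p A * (1 - p (A.length + 1) s) := by
  rw [taskG_eq_range p (A ++ [s]) s, taskG_eq_range p A s]
  rw [show (A ++ [s]).length = A.length + 1 by simp, Finset.prod_range_succ]
  congr 1
  · apply Finset.prod_congr rfl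
    intro k hk
    simp at hk
    rw [List.getD_append _ _ _ _ hk]
  · congr 2
    rw [List.getD_append_right _ _ _ _ (le_refl _)]
    simp

lemma taskG_nonneg {ι : Type*} (p : ℕ → ι → ℝ)
    (hp : ∀ k i, 0 ≤ p k i ∧ p k i ≤ 1) (A : List ι) : 0 ≤ taskG p A :=
  Finset.prod_nonneg fun k _ => by linarith [(hp (k.1+1) (A.get k)).2]

lemma taskG_prefix_le {ι : Type*} (p : ℕ → ι → ℝ)
    (hp : ∀ k i, 0 ≤ p k i ∧ p k i ≤ 1) (A : List ι) (U : List ι) :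
    taskG p (A ++ U) ≤ taskG p A := by
  induction U using List.reverseRecOn with
  | nil => simp
  | append_singleton U x ih =>
      rw [← List.append_assoc, taskG_append_singleton]
      calc taskG p (A ++ U) * (1 - p ((A ++ U).length + 1) x) ≤ taskG p (A ++ U) * 1 := by
            apply mul_le_mul_of_nonneg_left _ (taskG_nonneg p hp _)
            linarith [(hp ((A ++ U).length + 1) x).1]
        _ = taskG p (A ++ U) := mul_one _
        _ ≤ taskG p A := ih

/-- diminishing returns along prefixes for the task-scheduling objective:
if `A` is a prefix of `B` and appending agent `s` uses stage probabilities with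
`p_{|A|+1}(s) ≥ p_{|B|+1}(s)`, then `f(As) − f(A) ≥ f(Bs) − f(B)`. -/
theorem taskF_diminishing_returns {ι : Type*} (p : ℕ → ι → ℝ)
    (hp : ∀ k i, 0 ≤ p k i ∧ p k i ≤ 1)
    (A B : List ι) (hAB : A <+: B) (s : ι)
    (hps : p (B.length + 1) s ≤ p (A.length + 1) s) :
    taskF p (B ++ [s]) - taskF p B ≤ taskF p (A ++ [s]) - taskF p A := by
  have hF : ∀ C : List ι, taskF p C = 1 - taskG p C := fun C => rfl
  rw [hF, hF, hF, hF, taskG_append_singleton, taskG_append_singleton]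
  obtain ⟨U, rfl⟩ := hAB
  have h1 : taskG p (A ++ U) ≤ taskG p A := taskG_prefix_le p hp A U
  have h4 : taskG p (A ++ U) * p ((A ++ U).length + 1) s ≤ taskG p A * p (A.length + 1) s :=
    mul_le_mul h1 hps (hp ((A ++ U).length + 1) s).1 (taskG_nonneg p hp A)
  ring_nf
  ring_nf at h4
  linarith
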